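/- Let {f_i}_{i∈I} be a Parseval frame for a Hilbert space H, let J ⊆ I with J^c = I \ J, let S_J and S_{J^c} be the operators S_J f = ∑_{i∈J} ⟨f, f_i⟩ f_i and S_{J^c} f = ∑_{i∈J^c} ⟨f, f_i⟩ f_i, and let f ∈ H. Then the following six conditions are equivalent: (i) ∑_{i∈J} |⟨f, f_i⟩|² = ‖∑_{i∈J} ⟨f, f_i⟩ f_i‖²; (ii) ∑_{i∈J^c} |⟨f, f_i⟩|² = ‖∑_{i∈J^c} ⟨f, f_i⟩ f_i‖²; (iii) ∑_{i∈J} ⟨f, f_i⟩ f_i is orthogonal to ∑_{i∈J^c} ⟨f, f_i⟩ f_i; (iv) f is orthogonal to S_J S_{J^c} f; (v) S_J f = S_J² f; (vi) S_J S_{J^c} f = 0. -/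

import Mathlib

open scoped InnerProductSpace

/-- For a Parseval frame `{f_i}`, `J ⊆ I` with partial frame operators `S_J`, `S_{J^c}`,
and `x ∈ H`, the following are equivalent:
(i) `∑_{i∈J} |⟨x,f_i⟩|² = ‖∑_{i∈J} ⟨x,f_i⟩ f_i‖²`;
(ii) `∑_{i∈J^c} |⟨x,f_i⟩|² = ‖∑_{i∈J^c} ⟨x,f_i⟩ f_i‖²`;
(iii) `∑_{i∈J} ⟨x,f_i⟩ f_i ⊥ ∑_{i∈J^c} ⟨x,f_i⟩ f_i`;
(iv) `x ⊥ S_J S_{J^c} x`;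
(v) `S_J x = S_J² x`;
(vi) `S_J S_{J^c} x = 0`. -/
theorem stmt_16 {H : Type*} [NormedAddCommGroup H] [InnerProductSpace ℂ H] [CompleteSpace H]
    {ι : Type*} (f : ι → H)
    (hP : ∀ x : H, HasSum (fun i => ‖⟪f i, x⟫_ℂ‖ ^ 2) (‖x‖ ^ 2))
    (J : Set ι) (SJ SJc : H →L[ℂ] H)
    (hSJ : ∀ x : H, HasSum (fun i : J => ⟪f i, x⟫_ℂ • (f i : H)) (SJ x))
    (hSJc : ∀ x : H, HasSum (fun i : ↥Jᶜ => ⟪f i, x⟫_ℂ • (f i : H)) (SJc x))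
    (x : H) :
    List.TFAE
      [ (∑' i : J, ‖⟪f i, x⟫_ℂ‖ ^ 2) = ‖∑' i : J, ⟪f i, x⟫_ℂ • (f i : H)‖ ^ 2,
        (∑' i : ↥Jᶜ, ‖⟪f i, x⟫_ℂ‖ ^ 2) = ‖∑' i : ↥Jᶜ, ⟪f i, x⟫_ℂ • (f i : H)‖ ^ 2,
        ⟪∑' i : J, ⟪f i, x⟫_ℂ • (f i : H), ∑' i : ↥Jᶜ, ⟪f i, x⟫_ℂ • (f i : H)⟫_ℂ = 0,
        ⟪x, SJ (SJc x)⟫_ℂ = 0,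
        SJ x = SJ (SJ x),
        SJ (SJc x) = 0 ] := by
  have hsum : ∀ z : H, Summable fun i => ‖⟪f i, z⟫_ℂ‖ ^ 2 := fun z => (hP z).summable
  -- inner products against partial frame operators, as sums
  have hinner : ∀ y z : H,
      HasSum (fun i : J => ⟪f i, z⟫_ℂ * ⟪y, f i⟫_ℂ) ⟪y, SJ z⟫_ℂ := by
    intro y z
    have h := (innerSL ℂ y).hasSum (hSJ z)
    simpa [inner_smul_right] using h
  have hinnerc : ∀ y z : H,
      HasSum (fun i : ↥Jᶜ => ⟪f i, z⟫_ℂ * ⟪y, f i⟫_ℂ) ⟪y, SJc z⟫_ℂ := by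
    intro y z
    have h := (innerSL ℂ y).hasSum (hSJc z)
    simpa [inner_smul_right] using h
  -- diagonal inner products are (complexifications of) partial sums of `‖⟪f i, z⟫‖²`
  have hdiag : ∀ z : H, ⟪z, SJ z⟫_ℂ = ((∑' i : J, ‖⟪f i, z⟫_ℂ‖ ^ 2 : ℝ) : ℂ) := by
    intro z
    have h := hinner z z
    have he : (fun i : J => ⟪f i, z⟫_ℂ * ⟪z, (f i : H)⟫_ℂ)
        = fun i : J => ((‖⟪f i, z⟫_ℂ‖ ^ 2 : ℝ) : ℂ) := by
      funext i
      rw [← inner_conj_symm z (f i), Complex.mul_conj']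
      norm_cast
    rw [he] at h
    have h2 : HasSum (fun i : J => ((‖⟪f i, z⟫_ℂ‖ ^ 2 : ℝ) : ℂ))
        ((∑' i : J, ‖⟪f i, z⟫_ℂ‖ ^ 2 : ℝ) : ℂ) :=
      Complex.ofRealCLM.hasSum ((hsum z).subtype J).hasSum
    exact h.unique h2
  have hdiagc : ∀ z : H, ⟪z, SJc z⟫_ℂ = ((∑' i : ↥Jᶜ, ‖⟪f i, z⟫_ℂ‖ ^ 2 : ℝ) : ℂ) := by
    intro z
    have h := hinnerc z z
    have he : (fun i : ↥Jᶜ => ⟪f i, z⟫_ℂ * ⟪z, (f i : H)⟫_ℂ)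
        = fun i : ↥Jᶜ => ((‖⟪f i, z⟫_ℂ‖ ^ 2 : ℝ) : ℂ) := by
      funext i
      rw [← inner_conj_symm z (f i), Complex.mul_conj']
      norm_cast
    rw [he] at h
    have h2 : HasSum (fun i : ↥Jᶜ => ((‖⟪f i, z⟫_ℂ‖ ^ 2 : ℝ) : ℂ))
        ((∑' i : ↥Jᶜ, ‖⟪f i, z⟫_ℂ‖ ^ 2 : ℝ) : ℂ) :=
      Complex.ofRealCLM.hasSum ((hsum z).subtype Jᶜ).hasSum
    exact h.unique h2
  -- `SJ` is self-adjoint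
  have hsa : ∀ y z : H, ⟪SJ y, z⟫_ℂ = ⟪y, SJ z⟫_ℂ := by
    intro y z
    rw [← inner_conj_symm (SJ y) z]
    have h := (hinner z y).map (starRingEnd ℂ) (Complex.continuous_conj)
    have he : ((starRingEnd ℂ) ∘ fun i : J => ⟪f i, y⟫_ℂ * ⟪z, (f i : H)⟫_ℂ)
        = fun i : J => ⟪f i, z⟫_ℂ * ⟪y, (f i : H)⟫_ℂ := by
      funext i
      simp only [Function.comp_apply, map_mul, inner_conj_symm]
      ring
    rw [he] at h
    exact h.unique (hinner y z)
  -- the splitting `∑_J + ∑_{Jᶜ} = ‖z‖²`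
  have hsplit : ∀ z : H,
      (∑' i : J, ‖⟪f i, z⟫_ℂ‖ ^ 2) + (∑' i : ↥Jᶜ, ‖⟪f i, z⟫_ℂ‖ ^ 2) = ‖z‖ ^ 2 := by
    intro z
    exact ((((hsum z).subtype J).hasSum).add_compl (((hsum z).subtype Jᶜ).hasSum)).unique (hP z)
  -- reconstruction: `SJ + SJc = id`
  have hrec : ∀ z : H, SJ z + SJc z = z := by
    have key : ∀ z : H,
        ⟪((SJ : H →ₗ[ℂ] H) + (SJc : H →ₗ[ℂ] H)) z, z⟫_ℂ = ⟪(LinearMap.id : H →ₗ[ℂ] H) z, z⟫_ℂ := by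
      intro z
      simp only [LinearMap.add_apply, LinearMap.id_apply, ContinuousLinearMap.coe_coe]
      rw [inner_add_left, ← inner_conj_symm (SJ z) z, ← inner_conj_symm (SJc z) z,
        hdiag z, hdiagc z, Complex.conj_ofReal, Complex.conj_ofReal, ← Complex.ofReal_add,
        hsplit z, inner_self_eq_norm_sq_to_K]
      norm_num
    have := (ext_inner_map ((SJ : H →ₗ[ℂ] H) + (SJc : H →ₗ[ℂ] H)) LinearMap.id).mp key
    intro z
    have hz := LinearMap.congr_fun this z
    simpa using hz
  -- identify the tsums in the statement
  have ht1 : (∑' i : J, ⟪f i, x⟫_ℂ • (f i : H)) = SJ x := (hSJ x).tsum_eq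
  have ht2 : (∑' i : ↥Jᶜ, ⟪f i, x⟫_ℂ • (f i : H)) = SJc x := (hSJc x).tsum_eq
  set a := SJ x with ha
  set b := SJc x with hb
  set S1 : ℝ := ∑' i : J, ‖⟪f i, x⟫_ℂ‖ ^ 2 with hS1
  set S2 : ℝ := ∑' i : ↥Jᶜ, ‖⟪f i, x⟫_ℂ‖ ^ 2 with hS2
  have hxa : ⟪x, a⟫_ℂ = (S1 : ℂ) := hdiag x
  have hxb : ⟪x, b⟫_ℂ = (S2 : ℂ) := hdiagc x
  have hba : b = x - a := by rw [eq_sub_iff_add_eq, add_comm]; exact hrec x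
  -- ⟪a, b⟫ in terms of S1
  have habS : ⟪a, b⟫_ℂ = ((S1 - ‖a‖ ^ 2 : ℝ) : ℂ) := by
    rw [hba, inner_sub_right, ← inner_conj_symm a x, hxa, Complex.conj_ofReal,
      inner_self_eq_norm_sq_to_K]
    push_cast
    norm_num
  have hbaS : ⟪b, a⟫_ℂ = ((S2 - ‖b‖ ^ 2 : ℝ) : ℂ) := by
    have hab' : a = x - b := by rw [eq_sub_iff_add_eq]; exact hrec x
    rw [hab', inner_sub_right, ← inner_conj_symm b x, hxb, Complex.conj_ofReal,
      inner_self_eq_norm_sq_to_K]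
    push_cast
    norm_num
  tfae_have 1 ↔ 3 := by
    rw [ht1, ht2, habS]
    rw [show ((S1 - ‖a‖ ^ 2 : ℝ) : ℂ) = 0 ↔ S1 - ‖a‖ ^ 2 = 0 from Complex.ofReal_eq_zero,
      sub_eq_zero]
  tfae_have 2 ↔ 3 := by
    rw [ht1, ht2]
    rw [← inner_conj_symm a b, hbaS, Complex.conj_ofReal,
      show ((S2 - ‖b‖ ^ 2 : ℝ) : ℂ) = 0 ↔ S2 - ‖b‖ ^ 2 = 0 from Complex.ofReal_eq_zero,
      sub_eq_zero]
  tfae_have 3 ↔ 4 := by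
    rw [ht1, ht2, ← hsa x (SJc x), ← ha, ← hb]
  tfae_have 5 ↔ 6 := by
    have h5 : SJ b = a - SJ a := by rw [hba, map_sub, ← ha]
    rw [h5, sub_eq_zero, eq_comm]
  tfae_have 6 → 4 := by
    intro h
    rw [h, inner_zero_right]
  tfae_have 3 → 6 := by
    rw [ht1, ht2]
    intro h3
    -- from (iii): S1 = ‖a‖²
    have hS1a : S1 = ‖a‖ ^ 2 := by
      rw [habS, Complex.ofReal_eq_zero, sub_eq_zero] at h3
      exact h3
    -- ⟪a, SJ a⟫ = U with U ≤ ‖a‖²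
    set U : ℝ := ∑' i : J, ‖⟪f i, a⟫_ℂ‖ ^ 2 with hU
    have hUa : ⟪a, SJ a⟫_ℂ = (U : ℂ) := hdiag a
    have hUle : U ≤ ‖a‖ ^ 2 := by
      have := hsplit a
      nlinarith [(tsum_nonneg (fun i : ↥Jᶜ => sq_nonneg ‖⟪f i, a⟫_ℂ‖) : 0 ≤ ∑' i : ↥Jᶜ, ‖⟪f i, a⟫_ℂ‖ ^ 2)]
    -- ⟪b, SJ b⟫ = U - ‖a‖²
    set T : ℝ := ∑' i : J, ‖⟪f i, b⟫_ℂ‖ ^ 2 with hT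
    have hTb : ⟪b, SJ b⟫_ℂ = (T : ℂ) := hdiag b
    have hxSJa : ⟪x, SJ a⟫_ℂ = ((‖a‖ ^ 2 : ℝ) : ℂ) := by
      rw [← hsa x a, ← ha, inner_self_eq_norm_sq_to_K]
      norm_num
    have hcomp : ⟪b, SJ b⟫_ℂ = ((U - ‖a‖ ^ 2 : ℝ) : ℂ) := by
      have h6 : SJ b = a - SJ a := by rw [hba, map_sub, ← ha]
      rw [h6, hba, inner_sub_left, inner_sub_right, inner_sub_right,
        hxa, hxSJa, inner_self_eq_norm_sq_to_K, hUa]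
      rw [hS1a]
      push_cast
      norm_num
    have hT0 : T = 0 := by
      have h1 : (T : ℂ) = ((U - ‖a‖ ^ 2 : ℝ) : ℂ) := by rw [← hTb, hcomp]
      have h2 : T = U - ‖a‖ ^ 2 := Complex.ofReal_injective h1
      have h3 : 0 ≤ T := tsum_nonneg fun i : J => sq_nonneg ‖⟪f i, b⟫_ℂ‖
      linarith
    -- each coefficient over J vanishes
    have hsumT : HasSum (fun i : J => ‖⟪f i, b⟫_ℂ‖ ^ 2) 0 := by
      have h : HasSum (fun i : J => ‖⟪f i, b⟫_ℂ‖ ^ 2) T := ((hsum b).subtype J).hasSum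
      simpa only [Function.comp, ← hT, hT0] using h
    have hzero : ∀ i : J, ⟪f i, b⟫_ℂ = 0 := by
      intro i
      have := (hasSum_zero_iff_of_nonneg fun i : J => sq_nonneg ‖⟪f i, b⟫_ℂ‖).mp hsumT
      have hi := congrFun this i
      simp only [Pi.zero_apply] at hi
      have hn : ‖⟪f i, b⟫_ℂ‖ = 0 := by nlinarith [norm_nonneg ⟪f i, b⟫_ℂ]
      exact norm_eq_zero.mp hn
    have : HasSum (fun i : J => ⟪f i, b⟫_ℂ • (f i : H)) 0 := by
      have he : (fun i : J => ⟪f i, b⟫_ℂ • (f i : H)) = fun _ => (0 : H) := by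
        funext i; rw [hzero i, zero_smul]
      rw [he]
      exact hasSum_zero
    exact (hSJ b).unique this
  tfae_have 4 → 3 := by
    rw [ht1, ht2, ← hsa x (SJc x), ← ha, ← hb]
    exact id
  tfae_finish
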